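/- Let v, v*, ζ, ζ* satisfy: ζ, ζ* : [0,T] → ℝ are continuous nondecreasing with ζ*(0) = ζ(0), ζ ≤ ζ* on [0,T], v(x,t) = 0 for x ≥ ζ(t), and whenever ζ* is differentiable at t₀ with (ζ*)'(t₀) > 0 there exists δ₀, c > 0 with v(ζ*(t₀)−δ, t₀) ≥ cδ for δ ∈ [0,δ₀], where ζ(t) = sup{x : v(x,t) > 0}. Assume also ζ* is Lipschitz (hence differentiable a.e.). Then ζ* = ζ on [0,T]. -/

import Mathlib

open Set MeasureTheory Filter Function
open scoped ENNReal NNReal Topology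

/-- Identification of the limit of the numerical interfaces with the true
free boundary: if `ζ* ≥ ζ`, `ζ*(0) = ζ(0)`, `ζ*` is Lipschitz and
nondecreasing, `v` vanishes to the right of `ζ`, and whenever `ζ*` moves
with positive speed the pressure grows linearly behind `ζ*`, then
`ζ* = ζ` on `[0,T]`. -/
theorem stmt17 (T : ℝ) (hT : 0 < T) (v : ℝ → ℝ → ℝ) (ζ ζs : ℝ → ℝ) (L : NNReal)
    (hvcont : Continuous fun p : ℝ × ℝ => v p.1 p.2)
    (hvnonneg : ∀ x t, 0 ≤ v x t)
    (hζcont : ContinuousOn ζ (Set.Icc 0 T))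
    (hζmono : MonotoneOn ζ (Set.Icc 0 T))
    (hζscont : ContinuousOn ζs (Set.Icc 0 T))
    (hζsmono : MonotoneOn ζs (Set.Icc 0 T))
    (hζslip : LipschitzOnWith L ζs (Set.Icc 0 T))
    (h0 : ζs 0 = ζ 0)
    (hle : ∀ t ∈ Set.Icc (0:ℝ) T, ζ t ≤ ζs t)
    (hζdef : ∀ t ∈ Set.Icc (0:ℝ) T, IsLUB {x : ℝ | 0 < v x t} (ζ t))
    (hzero : ∀ t ∈ Set.Icc (0:ℝ) T, ∀ x, ζ t ≤ x → v x t = 0)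
    (hgrowth : ∀ t₀ ∈ Set.Ioo (0:ℝ) T, ∀ d : ℝ, HasDerivAt ζs d t₀ → 0 < d →
      ∃ δ₀ > (0:ℝ), ∃ c > (0:ℝ), ∀ δ : ℝ, 0 ≤ δ → δ ≤ δ₀ →
        c * δ ≤ v (ζs t₀ - δ) t₀) :
    ∀ t ∈ Set.Icc (0:ℝ) T, ζs t = ζ t := by
  intro t₁ ht₁
  by_contra hne
  have hζt₁ : ζ t₁ < ζs t₁ := lt_of_le_of_ne (hle t₁ ht₁) fun h => hne h.symm
  -- the last time before t₁ where ζs = ζ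
  set S : Set ℝ := Icc 0 t₁ ∩ {t | ζs t - ζ t ≤ 0} with hSdef
  have h0S : (0:ℝ) ∈ S := ⟨⟨le_refl 0, ht₁.1⟩, by simp [h0]⟩
  have hSbdd : BddAbove S := ⟨t₁, fun x hx => hx.1.2⟩
  have hIccsub : Icc (0:ℝ) t₁ ⊆ Icc 0 T := Icc_subset_Icc le_rfl ht₁.2
  have hSclosed : IsClosed S := by
    have hcont : ContinuousOn (fun t => ζs t - ζ t) (Icc 0 t₁) :=
      (hζscont.mono hIccsub).sub (hζcont.mono hIccsub)
    have : S = Icc 0 t₁ ∩ (fun t => ζs t - ζ t) ⁻¹' Iic 0 := by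
      ext x; simp [hSdef]
    rw [this]
    exact hcont.preimage_isClosed_of_isClosed isClosed_Icc isClosed_Iic
  set s := sSup S with hs
  have hsS : s ∈ S := hSclosed.csSup_mem ⟨0, h0S⟩ hSbdd
  have hs0 : 0 ≤ s := hsS.1.1
  have hsT : s ∈ Icc 0 T := hIccsub hsS.1
  have hseq : ζs s = ζ s := le_antisymm (by have h := hsS.2; simp at h; linarith) (hle s hsT)
  have hslt : s < t₁ := by
    rcases lt_or_eq_of_le hsS.1.2 with h | h
    · exact h
    · exfalso; rw [h] at hseq; linarith
  have hgap : ∀ t, s < t → t ≤ t₁ → ζ t < ζs t := by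
    intro t hst htt₁
    by_contra hcon
    push_neg at hcon
    have htS : t ∈ S := ⟨⟨le_trans hs0 hst.le, htt₁⟩, by simp; linarith⟩
    exact absurd (le_csSup hSbdd htS) (not_le.mpr hst)
  -- the clamped extension G of ζs to all of ℝ
  set p : ℝ → ℝ := fun t => max 0 (min t T) with hp
  have hpmem : ∀ t, p t ∈ Icc (0:ℝ) T := fun t =>
    ⟨le_max_left _ _, max_le hT.le (min_le_right _ _)⟩
  have hpid : ∀ t ∈ Icc (0:ℝ) T, p t = t := by
    intro t ht
    simp [hp, min_eq_left ht.2, max_eq_right ht.1]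
  have hpmono : Monotone p := fun a b hab =>
    max_le_max le_rfl (min_le_min hab le_rfl)
  have hplip : ∀ a b : ℝ, |p a - p b| ≤ |a - b| := by
    intro a b
    have h1 : |p a - p b| ≤ |min a T - min b T| := by
      rw [hp]
      simp only [max_comm (0:ℝ)]
      exact abs_max_sub_max_le_abs _ _ _
    refine h1.trans ?_
    have := abs_min_sub_min_le_max a T b T
    simpa using this
  set G : ℝ → ℝ := fun t => ζs (p t) with hG
  have hGmono : Monotone G := fun a b hab =>
    hζsmono (hpmem a) (hpmem b) (hpmono hab)
  have hGlip : ∀ a b : ℝ, |G a - G b| ≤ (L : ℝ) * |a - b| := by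
    intro a b
    have := hζslip.dist_le_mul (p a) (hpmem a) (p b) (hpmem b)
    rw [Real.dist_eq, Real.dist_eq] at this
    exact this.trans (mul_le_mul_of_nonneg_left (hplip a b) L.coe_nonneg)
  have hGcont : Continuous G :=
    (LipschitzWith.of_dist_le_mul (K := L) fun a b => by
      rw [Real.dist_eq, Real.dist_eq]; exact hGlip a b).continuous
  have hGeq : ∀ t ∈ Icc (0:ℝ) T, G t = ζs t := fun t ht => by rw [hG]; simp [hpid t ht]
  have hGlb : ∀ t, ζs 0 ≤ G t := fun t =>
    hζsmono (left_mem_Icc.mpr hT.le) (hpmem t) (hpmem t).1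
  have hGub : ∀ t, G t ≤ ζs T := fun t =>
    hζsmono (hpmem t) (right_mem_Icc.mpr hT.le) (hpmem t).2
  -- ψ = G + id is a strictly monotone surjection, H its inverse
  set ψ : ℝ → ℝ := fun t => G t + t with hψ
  have hψs : StrictMono ψ := fun a b hab => by
    have := hGmono hab.le; simp only [hψ]; linarith
  have hψc : Continuous ψ := hGcont.add continuous_id
  have hψsurj : Function.Surjective ψ := by
    apply hψc.surjective
    · apply tendsto_atTop_mono (fun t => ?_) (tendsto_atTop_add_const_left atTop (ζs 0) tendsto_id)
      have := hGlb t; simp only [hψ, id]; linarith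
    · apply tendsto_atBot_mono (fun t => ?_) (tendsto_atBot_add_const_left atBot (ζs T) tendsto_id)
      have := hGub t; simp only [hψ, id]; linarith
  set e : ℝ ≃o ℝ := StrictMono.orderIsoOfSurjective ψ hψs hψsurj with he
  set H : ℝ → ℝ := ⇑e.symm with hH
  have hψH : ∀ y, ψ (H y) = y := by
    intro y
    exact e.apply_symm_apply y
  have hHψ : ∀ t, H (ψ t) = t := by
    intro t
    exact e.symm_apply_apply t
  have hHmono : Monotone H := e.symm.monotone
  have hHsm : StrictMono H := e.symm.strictMono
  have hHcont : Continuous H := e.symm.continuous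
  -- slope bounds for H
  have hHub : ∀ y z : ℝ, y ≤ z → H z - H y ≤ z - y := by
    intro y z hyz
    have h1 : ψ (H y) = y := hψH y
    have h2 : ψ (H z) = z := hψH z
    have h3 : G (H y) ≤ G (H z) := hGmono (hHmono hyz)
    simp only [hψ] at h1 h2
    linarith
  have hHlb : ∀ y z : ℝ, y ≤ z → z - y ≤ ((L : ℝ) + 1) * (H z - H y) := by
    intro y z hyz
    have h1 : ψ (H y) = y := hψH y
    have h2 : ψ (H z) = z := hψH z
    have h3 : |G (H z) - G (H y)| ≤ (L : ℝ) * |H z - H y| := hGlip _ _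
    have h4 : H y ≤ H z := hHmono hyz
    rw [abs_of_nonneg (by linarith : (0:ℝ) ≤ H z - H y)] at h3
    have h5 : G (H z) - G (H y) ≤ (L : ℝ) * (H z - H y) :=
      (le_abs_self _).trans h3
    simp only [hψ] at h1 h2
    nlinarith
  -- the Stieltjes measure of H
  set SF := hHmono.stieltjesFunction with hSF
  have hSFeq : ∀ y, SF y = H y := by
    intro y
    rw [hSF, hHmono.stieltjesFunction_eq]
    exact rightLim_eq_of_tendsto (h := nhdsGT_neBot y)
      ((hHcont.tendsto y).mono_left nhdsWithin_le_nhds)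
  set ν := SF.measure with hν
  set D : ℝ → ℝ≥0∞ := ν.rnDeriv volume with hD
  set a := ψ s with ha
  set b := ψ t₁ with hb
  have hab : a < b := hψs hslt
  have hζss : ζs s < ζs t₁ := by
    have : ζ s ≤ ζ t₁ := hζmono hsT ht₁ hslt.le
    linarith [hseq, hζt₁]
  have hba : t₁ - s < b - a := by
    have h1 : G s = ζs s := hGeq s hsT
    have h2 : G t₁ = ζs t₁ := hGeq t₁ ht₁
    simp only [ha, hb, hψ]
    linarith
  -- find a point y where H is differentiable with derivative < 1
  have hkey : ∃ y ∈ Ioo a b, HasDerivAt H (D y).toReal y ∧ D y < 1 := by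
    by_contra hno
    push_neg at hno
    have hae : ∀ᵐ y ∂(volume.restrict (Ioc a b)), (1 : ℝ≥0∞) ≤ D y := by
      have h1 : ∀ᵐ y ∂(volume.restrict (Ioc a b)), HasDerivAt H (D y).toReal y :=
        ae_restrict_of_ae hHmono.ae_hasDerivAt
      have h2 : ∀ᵐ y ∂(volume.restrict (Ioc a b)), y ∈ Ioc a b :=
        ae_restrict_mem measurableSet_Ioc
      have h3 : ∀ᵐ y ∂(volume.restrict (Ioc a b)), y ≠ b := by
        refine ae_restrict_of_ae ?_
        rw [ae_iff]
        have : {y : ℝ | ¬ y ≠ b} = {b} := by ext x; simp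
        rw [this]
        exact Real.volume_singleton
      filter_upwards [h1, h2, h3] with y hd hy hyb
      by_contra hlt
      push_neg at hlt
      exact absurd (hno y ⟨hy.1, lt_of_le_of_ne hy.2 hyb⟩ hd) (not_le.mpr hlt)
    have hint : volume (Ioc a b) ≤ ν (Ioc a b) := by
      calc volume (Ioc a b) = ∫⁻ _ in Ioc a b, 1 ∂volume := by simp
        _ ≤ ∫⁻ y in Ioc a b, D y ∂volume := lintegral_mono_ae hae
        _ = (volume.withDensity D) (Ioc a b) :=
            (withDensity_apply D measurableSet_Ioc).symm
        _ ≤ ν (Ioc a b) := Measure.le_iff'.mp (Measure.withDensity_rnDeriv_le ν volume) _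
    rw [SF.measure_Ioc, Real.volume_Ioc, hSFeq, hSFeq, ha, hb, hHψ, hHψ] at hint
    rw [ENNReal.ofReal_le_ofReal_iff (by linarith)] at hint
    linarith
  obtain ⟨y, hy, hdH, hD1⟩ := hkey
  set k := (D y).toReal with hk
  have hk1 : k < 1 := by
    have := (ENNReal.toReal_lt_toReal hD1.ne_top (by simp)).mpr hD1
    simpa using this
  have hkpos : 0 < k := by
    have hslope : Tendsto (slope H y) (𝓝[>] y) (𝓝 k) :=
      (hasDerivAt_iff_tendsto_slope.mp hdH).mono_left
        (nhdsWithin_mono y fun x hx => ne_of_gt hx)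
    have hLpos : (0:ℝ) < (L : ℝ) + 1 := by positivity
    have hlb : (1 : ℝ) / ((L : ℝ) + 1) ≤ k := by
      refine ge_of_tendsto hslope ?_
      filter_upwards [self_mem_nhdsWithin] with z hz
      have hz' : y < z := hz
      rw [slope_def_field]
      rw [div_le_div_iff₀ hLpos (by linarith : (0:ℝ) < z - y)]
      have := hHlb y z hz'.le
      nlinarith
    have : (0:ℝ) < 1 / ((L : ℝ) + 1) := by positivity
    linarith
  -- transfer the derivative to ζs at t₀ := H y
  set t₀ := H y with ht₀def
  have ht₀ : t₀ ∈ Ioo s t₁ := by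
    constructor
    · have := hHsm hy.1
      rwa [show H a = s by rw [ha, hHψ]] at this
    · have := hHsm hy.2
      rwa [show H b = t₁ by rw [hb, hHψ]] at this
  have ht₀T : t₀ ∈ Ioo (0:ℝ) T :=
    ⟨lt_of_le_of_lt hs0 ht₀.1, lt_of_lt_of_le ht₀.2 ht₁.2⟩
  have hψt₀ : ψ t₀ = y := hψH y
  have hψd : HasDerivAt ψ k⁻¹ t₀ := by
    refine HasDerivAt.of_local_left_inverse (hψc.continuousAt) ?_ (ne_of_gt hkpos)
      (Eventually.of_forall hHψ)
    · rw [hψt₀]; exact hdH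
  have hGd : HasDerivAt G (k⁻¹ - 1) t₀ := by
    have := hψd.sub (hasDerivAt_id t₀)
    have hfe : (ψ - id) = G := by funext t; simp [hψ]
    rwa [hfe] at this
  have hζsd : HasDerivAt ζs (k⁻¹ - 1) t₀ := by
    refine hGd.congr_of_eventuallyEq ?_ |>.congr_deriv rfl
    · filter_upwards [isOpen_Ioo.mem_nhds ht₀T] with x hx
      exact (hGeq x (Ioo_subset_Icc_self hx)).symm
  have hd : 0 < k⁻¹ - 1 := by
    have := (one_lt_inv₀ hkpos).mpr hk1
    linarith
  obtain ⟨δ₀, hδ₀, c, hc, hcd⟩ := hgrowth t₀ ht₀T _ hζsd hd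
  have hζt₀ : ζ t₀ < ζs t₀ := hgap t₀ ht₀.1 ht₀.2.le
  set δ := min δ₀ (ζs t₀ - ζ t₀) with hδ
  have hδpos : 0 < δ := lt_min hδ₀ (by linarith)
  have hvz : v (ζs t₀ - δ) t₀ = 0 := by
    refine hzero t₀ ⟨ht₀T.1.le, ht₀T.2.le⟩ _ ?_
    have : δ ≤ ζs t₀ - ζ t₀ := min_le_right _ _
    linarith
  have := hcd δ hδpos.le (min_le_left _ _)
  rw [hvz] at this
  nlinarith
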